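/- Let k₁, k₂ ≥ 0 with k = k₁ + k₂, let A : ℂ^{k₁} → ℂ^{k₁} and B : ℂ^{k₂} → ℂ^{k₂} be linear maps with A invertible and ‖B‖ < ‖A^{−1}‖^{−1}, and set ξ = 1 − ‖B‖‖A^{−1}‖ ∈ (0,1]. Let 0 ≤ ξ₀ ≤ 1, ε > 0 and 0 < δ < 2ε satisfy: ξ₀(1−ξ) + 2δ(1+ξ₀)‖A^{−1}‖ ≤ 1; (ξ₀‖B‖ + δ(1+ξ₀))(‖A^{−1}‖^{−1} − δ(1+ξ₀))^{−1} ≤ ξ₀; (‖B‖ + 2δ)e^{−2ε} + δ ≤ 1; and δ(1+ξ₀) ≤ min{(‖A^{−1}‖^{−1} − ξ₀‖B‖)/2, ‖A^{−1}‖^{−1} − 1}. Let R₀ ≤ R₁ and let g : B_k(0,R₀) → B_k(0,R₁) be holomorphic with g(0) = 0, Dg(0) = (A,B) (block diagonal with respect to ℂ^k = ℂ^{k₁} × ℂ^{k₂}), and ‖Dg(w) − Dg(0)‖ ≤ δ for all w ∈ B_k(0,R₀). If φ : B_{k₂}(0,R) → ℂ^{k₁} satisfies ‖φ(0)‖ ≤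 R' and Lip(φ) ≤ ξ₀ for some R' ≤ R ≤ R₀/2, then there exists ψ : B_{k₂}(0, Re^{−2ε}) → ℂ^{k₁} with Lip(ψ) ≤ ξ₀, ‖ψ(0)‖ ≤ R', and g(graph(ψ)) ⊆ graph(φ). -/

import Mathlib

open Metric Set Filter
open scoped Topology NNReal

noncomputable section

set_option maxHeartbeats 4000000

/-- **Theorem (graph transform, non-invertible case).**
`ℂ^k = ℂ^{k₁} × ℂ^{k₂}`; `A : ℂ^{k₁} → ℂ^{k₁}` is an invertible linear map,
`B : ℂ^{k₂} → ℂ^{k₂}` a linear map with `‖B‖ < ‖A⁻¹‖⁻¹` (so that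
`ξ = 1 - ‖B‖‖A⁻¹‖ ∈ (0,1]`). Let `0 ≤ ξ₀ ≤ 1` and `0 < δ < 2ε` satisfy the four stated
inequalities. Let `g : B_k(0,R₀) → B_k(0,R₁)` be holomorphic with `R₀ ≤ R₁`, `g(0) = 0`,
`Dg(0) = (A, B)` block diagonal, and `‖Dg(w) - Dg(0)‖ ≤ δ` on `B_k(0,R₀)`.
If `φ : B_{k₂}(0,R) → ℂ^{k₁}` satisfies `‖φ(0)‖ ≤ R'` and `Lip(φ) ≤ ξ₀` for some
`R' ≤ R ≤ R₀/2`, then there is `ψ : B_{k₂}(0, R e^{-2ε}) → ℂ^{k₁}` with `Lip(ψ) ≤ ξ₀`,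
`‖ψ(0)‖ ≤ R'` and `g(graph(ψ)) ⊆ graph(φ)`. -/
theorem graph_transform_noninvertible
    (k₁ k₂ : ℕ)
    (A : EuclideanSpace ℂ (Fin k₁) ≃L[ℂ] EuclideanSpace ℂ (Fin k₁))
    (B : EuclideanSpace ℂ (Fin k₂) →L[ℂ] EuclideanSpace ℂ (Fin k₂))
    (hAB : ‖B‖ < ‖(A.symm : EuclideanSpace ℂ (Fin k₁) →L[ℂ] EuclideanSpace ℂ (Fin k₁))‖⁻¹)
    (ξ₀ ε δ : ℝ) (hξ₀0 : 0 ≤ ξ₀) (hξ₀1 : ξ₀ ≤ 1) (hδ0 : 0 < δ) (hδε : δ < 2 * ε)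
    (h1 : ξ₀ * (‖B‖ *
        ‖(A.symm : EuclideanSpace ℂ (Fin k₁) →L[ℂ] EuclideanSpace ℂ (Fin k₁))‖)
      + 2 * δ * (1 + ξ₀) *
        ‖(A.symm : EuclideanSpace ℂ (Fin k₁) →L[ℂ] EuclideanSpace ℂ (Fin k₁))‖ ≤ 1)
    (h2 : (ξ₀ * ‖B‖ + δ * (1 + ξ₀)) *
        (‖(A.symm : EuclideanSpace ℂ (Fin k₁) →L[ℂ] EuclideanSpace ℂ (Fin k₁))‖⁻¹
          - δ * (1 + ξ₀))⁻¹ ≤ ξ₀)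
    (h3 : (‖B‖ + 2 * δ) * Real.exp (-2 * ε) + δ ≤ 1)
    (h4 : δ * (1 + ξ₀) ≤ min
        ((‖(A.symm : EuclideanSpace ℂ (Fin k₁) →L[ℂ] EuclideanSpace ℂ (Fin k₁))‖⁻¹
            - ξ₀ * ‖B‖) / 2)
        (‖(A.symm : EuclideanSpace ℂ (Fin k₁) →L[ℂ] EuclideanSpace ℂ (Fin k₁))‖⁻¹ - 1))
    (R₀ R₁ : ℝ) (hR₀R₁ : R₀ ≤ R₁)
    (g : EuclideanSpace ℂ (Fin k₁) × EuclideanSpace ℂ (Fin k₂) →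
      EuclideanSpace ℂ (Fin k₁) × EuclideanSpace ℂ (Fin k₂))
    (hgmaps : MapsTo g (ball 0 R₀) (ball 0 R₁))
    (hg0 : g 0 = 0)
    (hghol : DifferentiableOn ℂ g (ball 0 R₀))
    (hDg0 : fderiv ℂ g 0 =
      ContinuousLinearMap.prodMap
        (A : EuclideanSpace ℂ (Fin k₁) →L[ℂ] EuclideanSpace ℂ (Fin k₁)) B)
    (hDg : ∀ w ∈ ball (0 : EuclideanSpace ℂ (Fin k₁) × EuclideanSpace ℂ (Fin k₂)) R₀,
      ‖fderiv ℂ g w - fderiv ℂ g 0‖ ≤ δ)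
    (R R' : ℝ) (hR'R : R' ≤ R) (hRR₀ : R ≤ R₀ / 2)
    (φ : EuclideanSpace ℂ (Fin k₂) → EuclideanSpace ℂ (Fin k₁))
    (hφ0 : ‖φ 0‖ ≤ R')
    (hφlip : LipschitzOnWith ξ₀.toNNReal φ (closedBall 0 R)) :
    ∃ ψ : EuclideanSpace ℂ (Fin k₂) → EuclideanSpace ℂ (Fin k₁),
      LipschitzOnWith ξ₀.toNNReal ψ (closedBall 0 (R * Real.exp (-2 * ε))) ∧
      ‖ψ 0‖ ≤ R' ∧
      g '' ((fun y => (ψ y, y)) '' closedBall 0 (R * Real.exp (-2 * ε)))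
        ⊆ (fun y => (φ y, y)) '' closedBall 0 R := by
  classical
  set a := ‖(A.symm : EuclideanSpace ℂ (Fin k₁) →L[ℂ] EuclideanSpace ℂ (Fin k₁))‖ with ha_def
  set Ee := Real.exp (-2 * ε) with hEe_def
  have hb : (0:ℝ) ≤ ‖B‖ := norm_nonneg _
  have ha : 0 < a := by
    rcases (norm_nonneg
        (A.symm : EuclideanSpace ℂ (Fin k₁) →L[ℂ] EuclideanSpace ℂ (Fin k₁))).lt_or_eq with h | h
    · exact h
    · exfalso
      rw [ha_def, ← h, inv_zero] at hAB
      exact absurd hAB (not_lt.mpr hb)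
  have hainv : 0 < a⁻¹ := inv_pos.mpr ha
  have haa : a * a⁻¹ = 1 := mul_inv_cancel₀ ha.ne'
  have hε : 0 < ε := by linarith
  have hEe1 : Ee < 1 := by
    rw [hEe_def]
    exact Real.exp_lt_one_iff.mpr (by linarith)
  have hEe0 : 0 < Ee := Real.exp_pos _
  have hcoeξ : ((ξ₀.toNNReal : ℝ≥0) : ℝ) = ξ₀ := Real.coe_toNNReal _ hξ₀0
  clear_value a Ee
  -- arithmetic consequences of h2, h4
  have h4r : δ * (1 + ξ₀) ≤ a⁻¹ - 1 := h4.trans (min_le_right _ _)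
  have h4l : δ * (1 + ξ₀) ≤ (a⁻¹ - ξ₀ * ‖B‖) / 2 := h4.trans (min_le_left _ _)
  have hξb : 0 ≤ ξ₀ * ‖B‖ := mul_nonneg hξ₀0 hb
  have hδξ : 0 < δ * (1 + ξ₀) := mul_pos hδ0 (by linarith)
  have hpos : 0 < a⁻¹ - δ * (1 + ξ₀) := by linarith
  have h2' : ξ₀ * ‖B‖ + δ * (1 + ξ₀) ≤ ξ₀ * (a⁻¹ - δ * (1 + ξ₀)) := by
    rw [← div_eq_mul_inv] at h2
    exact (div_le_iff₀ hpos).mp h2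
  have hA1 : a * (1 + δ * (1 + ξ₀)) ≤ 1 := by
    have : a * (1 + δ * (1 + ξ₀)) ≤ a * a⁻¹ := by
      apply mul_le_mul_of_nonneg_left _ ha.le
      linarith
    linarith [this, haa]
  have hstar : a * (ξ₀ * ‖B‖ + δ * (1 + ξ₀)) ≤ ξ₀ * (1 - a * (δ * (1 + ξ₀))) := by
    have h := mul_le_mul_of_nonneg_left h2' ha.le
    have : a * (ξ₀ * (a⁻¹ - δ * (1 + ξ₀))) = ξ₀ * (1 - a * (δ * (1 + ξ₀))) := by
      linear_combination ξ₀ * haa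
    linarith [h, this.le, this.ge]
  have hκ : a * (δ * (1 + ξ₀)) < 1 := by
    have h := mul_le_mul_of_nonneg_left h4r ha.le
    have h' : a * (a⁻¹ - 1) = 1 - a := by linear_combination haa
    nlinarith
  have hstar' : a * (ξ₀ * ‖B‖ + δ * (1 + ξ₀)) ≤ ξ₀ := by
    have h9 : 0 ≤ ξ₀ * (a * (δ * (1 + ξ₀))) := mul_nonneg hξ₀0 (mul_nonneg ha.le hδξ.le)
    nlinarith [hstar]
  -- trivial case R < 0 : everything is empty
  rcases lt_or_ge R 0 with hR | hR0
  · have hemp : closedBall (0 : EuclideanSpace ℂ (Fin k₂)) (R * Ee) = ∅ :=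
      closedBall_eq_empty.mpr (mul_neg_of_neg_of_pos hR hEe0)
    refine ⟨φ, ?_, hφ0, ?_⟩
    · rw [hemp]; exact lipschitzOnWith_empty _ _
    · rw [hemp]; simp
  have hR'0 : 0 ≤ R' := le_trans (norm_nonneg _) hφ0
  rcases hR0.eq_or_lt with hR | hRpos
  · -- R = 0 case
    have hR' : R' = 0 := le_antisymm (hR ▸ hR'R) hR'0
    have hφ00 : φ 0 = 0 := by
      have : ‖φ 0‖ ≤ 0 := hφ0.trans hR'.le
      simpa using le_antisymm this (norm_nonneg _)
    refine ⟨fun _ => 0, ?_, by simpa using hR'0, ?_⟩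
    · exact (LipschitzWith.const' (0 : EuclideanSpace ℂ (Fin k₁))).lipschitzOnWith
    · rintro z ⟨w, ⟨y, hy, rfl⟩, rfl⟩
      have hy0 : y = 0 := by
        have h5 : ‖y‖ ≤ R * Ee := mem_closedBall_zero_iff.mp hy
        have h6 : ‖y‖ ≤ 0 := by rw [← hR] at h5; simpa using h5
        exact norm_eq_zero.mp (le_antisymm h6 (norm_nonneg y))
      subst hy0
      refine ⟨0, mem_closedBall_self hR0, ?_⟩
      show ((φ 0, (0 : EuclideanSpace ℂ (Fin k₂))) :
          EuclideanSpace ℂ (Fin k₁) × EuclideanSpace ℂ (Fin k₂)) = g (0, 0)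
      have h7 : (((0 : EuclideanSpace ℂ (Fin k₁)), (0 : EuclideanSpace ℂ (Fin k₂))) :
          EuclideanSpace ℂ (Fin k₁) × EuclideanSpace ℂ (Fin k₂)) = 0 := rfl
      rw [h7, hg0, hφ00]
      exact h7
  -- main case 0 < R
  have hR₀pos : 0 < R₀ := by linarith
  have hREe : R * Ee < R := by nlinarith
  have harith1 : ∀ Y : ℝ, 0 ≤ Y → Y ≤ R * Ee → ‖B‖ * Y + δ * (R' + Y) ≤ R := by
    intro Y hY0 hY
    nlinarith [mul_le_mul_of_nonneg_left hY hb, mul_le_mul_of_nonneg_left hY hδ0.le,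
      mul_le_mul_of_nonneg_left h3 hRpos.le,
      mul_nonneg hδ0.le (mul_nonneg hRpos.le hEe0.le)]
  have harith2 : ∀ Y : ℝ, 0 ≤ Y →
      a * ((R' + ξ₀ * (‖B‖ * Y + δ * (R' + Y))) + δ * (R' + Y)) ≤ R' + ξ₀ * Y := by
    intro Y hY
    nlinarith [mul_le_mul_of_nonneg_right hA1 hR'0, mul_le_mul_of_nonneg_right hstar' hY]
  have harith3 : ∀ d e : ℝ, 0 ≤ d → 0 ≤ e →
      d ≤ a * (ξ₀ * (‖B‖ * e + δ * (d + e)) + δ * (d + e)) → d ≤ ξ₀ * e := by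
    intro d e hd he hle
    have hfact : d * (1 - a * (δ * (1 + ξ₀))) ≤ a * (ξ₀ * ‖B‖ + δ * (1 + ξ₀)) * e := by
      nlinarith
    have hfact2 : a * (ξ₀ * ‖B‖ + δ * (1 + ξ₀)) * e ≤
        ξ₀ * (1 - a * (δ * (1 + ξ₀))) * e :=
      mul_le_mul_of_nonneg_right hstar he
    have hc : 0 < 1 - a * (δ * (1 + ξ₀)) := by linarith
    nlinarith
  -- the linear part and nonlinear remainder
  set L : EuclideanSpace ℂ (Fin k₁) × EuclideanSpace ℂ (Fin k₂) →L[ℂ]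
      EuclideanSpace ℂ (Fin k₁) × EuclideanSpace ℂ (Fin k₂) :=
    ContinuousLinearMap.prodMap
      (A : EuclideanSpace ℂ (Fin k₁) →L[ℂ] EuclideanSpace ℂ (Fin k₁)) B with hL_def
  set H : EuclideanSpace ℂ (Fin k₁) × EuclideanSpace ℂ (Fin k₂) →
      EuclideanSpace ℂ (Fin k₁) × EuclideanSpace ℂ (Fin k₂) := fun w => g w - L w with hH_def
  clear_value L H
  have hH0 : H 0 = 0 := by rw [hH_def]; simp [hg0]
  have hHlip : ∀ u ∈ ball (0 : EuclideanSpace ℂ (Fin k₁) × EuclideanSpace ℂ (Fin k₂)) R₀,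
      ∀ v ∈ ball (0 : EuclideanSpace ℂ (Fin k₁) × EuclideanSpace ℂ (Fin k₂)) R₀,
      ‖H u - H v‖ ≤ δ * ‖u - v‖ := by
    intro u hu v hv
    refine Convex.norm_image_sub_le_of_norm_hasFDerivWithin_le
      (f := H) (f' := fun w => fderiv ℂ g w - L) (s := ball 0 R₀)
      (fun w hw => ?_) (fun w hw => ?_) (convex_ball _ _) hv hu
    · rw [hH_def]
      exact ((hghol.differentiableAt (isOpen_ball.mem_nhds hw)).hasFDerivAt.sub
        L.hasFDerivAt).hasFDerivWithinAt
    · show ‖fderiv ℂ g w - L‖ ≤ δ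
      rw [← hDg0]
      exact hDg w hw
  have hHnorm : ∀ w ∈ ball (0 : EuclideanSpace ℂ (Fin k₁) × EuclideanSpace ℂ (Fin k₂)) R₀,
      ‖H w‖ ≤ δ * ‖w‖ := by
    intro w hw
    have := hHlip w hw 0 (mem_ball_self hR₀pos)
    simpa [hH0] using this
  -- components of g
  have hg1 : ∀ x y, (g (x, y)).1 = A x + (H (x, y)).1 := by
    intro x y
    rw [hH_def, hL_def]
    simp
  have hg2 : ∀ x y, (g (x, y)).2 = B y + (H (x, y)).2 := by
    intro x y
    rw [hH_def, hL_def]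
    simp
  have hAs : ∀ z : EuclideanSpace ℂ (Fin k₁), ‖A.symm z‖ ≤ a * ‖z‖ := by
    intro z
    rw [ha_def]
    exact (A.symm : EuclideanSpace ℂ (Fin k₁) →L[ℂ] EuclideanSpace ℂ (Fin k₁)).le_opNorm z
  -- the fixed point map
  set F : EuclideanSpace ℂ (Fin k₂) → EuclideanSpace ℂ (Fin k₁) → EuclideanSpace ℂ (Fin k₁) :=
    fun y x => A.symm (φ ((g (x, y)).2) - (H (x, y)).1) with hF_def
  clear_value F
  -- basic membership estimates
  have hφq : ∀ q : EuclideanSpace ℂ (Fin k₂), ‖q‖ ≤ R → ‖φ q‖ ≤ R' + ξ₀ * ‖q‖ := by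
    intro q hq
    have := hφlip.dist_le_mul q (mem_closedBall_zero_iff.mpr hq) 0
      (mem_closedBall_self hRpos.le)
    rw [dist_eq_norm, hcoeξ, dist_eq_norm, sub_zero] at this
    calc ‖φ q‖ ≤ ‖φ 0‖ + ‖φ q - φ 0‖ := by
          have := norm_add_le (φ 0) (φ q - φ 0); simpa using this
      _ ≤ R' + ξ₀ * ‖q‖ := add_le_add hφ0 this
  have hmem : ∀ (y : EuclideanSpace ℂ (Fin k₂)), ‖y‖ ≤ R * Ee →
      ∀ (x : EuclideanSpace ℂ (Fin k₁)), ‖x‖ ≤ R' + ξ₀ * ‖y‖ →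
      ((x, y) ∈ ball (0 : EuclideanSpace ℂ (Fin k₁) × EuclideanSpace ℂ (Fin k₂)) R₀ ∧
        ‖(x, y)‖ ≤ R' + ‖y‖) ∧ ‖(g (x, y)).2‖ ≤ R := by
    intro y hy x hx
    have hy0 : (0:ℝ) ≤ ‖y‖ := norm_nonneg _
    have hξy : ξ₀ * ‖y‖ ≤ ‖y‖ := by
      calc ξ₀ * ‖y‖ ≤ 1 * ‖y‖ := mul_le_mul_of_nonneg_right hξ₀1 hy0
        _ = ‖y‖ := one_mul _
    have hx2 : ‖x‖ ≤ R' + ‖y‖ := hx.trans (add_le_add_right hξy R')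
    have hM : ‖(x, y)‖ ≤ R' + ‖y‖ := by
      rw [Prod.norm_def]
      exact max_le hx2 (by linarith)
    have hMlt : ‖(x, y)‖ < R₀ := by
      have h8 : R' + ‖y‖ < R₀ := by linarith
      linarith
    have hball : (x, y) ∈ ball (0 : EuclideanSpace ℂ (Fin k₁) ×
        EuclideanSpace ℂ (Fin k₂)) R₀ := mem_ball_zero_iff.mpr hMlt
    refine ⟨⟨hball, hM⟩, ?_⟩
    have hH2 : ‖(H (x, y)).2‖ ≤ δ * ‖(x, y)‖ :=
      (norm_snd_le _).trans (hHnorm _ hball)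
    calc ‖(g (x, y)).2‖ = ‖B y + (H (x, y)).2‖ := by rw [hg2]
      _ ≤ ‖B y‖ + ‖(H (x, y)).2‖ := norm_add_le _ _
      _ ≤ ‖B‖ * ‖y‖ + δ * (R' + ‖y‖) := by
          refine add_le_add (B.le_opNorm y) (hH2.trans ?_)
          exact mul_le_mul_of_nonneg_left hM hδ0.le
      _ ≤ R := harith1 ‖y‖ hy0 hy
  -- existence of the fixed point for each y
  have exists_fix : ∀ (y : EuclideanSpace ℂ (Fin k₂)), ‖y‖ ≤ R * Ee →
      ∃ x, ‖x‖ ≤ R' + ξ₀ * ‖y‖ ∧ x = F y x := by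
    intro y hy
    have hy0 : (0:ℝ) ≤ ‖y‖ := norm_nonneg _
    have hr : (0:ℝ) ≤ R' + ξ₀ * ‖y‖ := by positivity
    have hsc : IsComplete (closedBall (0 : EuclideanSpace ℂ (Fin k₁)) (R' + ξ₀ * ‖y‖)) :=
      Metric.isClosed_closedBall.isComplete
    have hsf : MapsTo (F y) (closedBall (0 : EuclideanSpace ℂ (Fin k₁)) (R' + ξ₀ * ‖y‖))
        (closedBall (0 : EuclideanSpace ℂ (Fin k₁)) (R' + ξ₀ * ‖y‖)) := by
      intro x hx
      rw [mem_closedBall_zero_iff] at hx ⊢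
      obtain ⟨⟨hball, hM⟩, hq⟩ := hmem y hy x hx
      have hH1 : ‖(H (x, y)).1‖ ≤ δ * ‖(x, y)‖ :=
        (norm_fst_le _).trans (hHnorm _ hball)
      have hqb : ‖(g (x, y)).2‖ ≤ ‖B‖ * ‖y‖ + δ * (R' + ‖y‖) := by
        calc ‖(g (x, y)).2‖ = ‖B y + (H (x, y)).2‖ := by rw [hg2]
          _ ≤ ‖B y‖ + ‖(H (x, y)).2‖ := norm_add_le _ _
          _ ≤ ‖B‖ * ‖y‖ + δ * (R' + ‖y‖) := by
              refine add_le_add (B.le_opNorm y) ?_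
              exact ((norm_snd_le _).trans (hHnorm _ hball)).trans
                (mul_le_mul_of_nonneg_left hM hδ0.le)
      rw [hF_def]
      calc ‖A.symm (φ ((g (x, y)).2) - (H (x, y)).1)‖
          ≤ a * ‖φ ((g (x, y)).2) - (H (x, y)).1‖ := hAs _
        _ ≤ a * (‖φ ((g (x, y)).2)‖ + ‖(H (x, y)).1‖) :=
            mul_le_mul_of_nonneg_left (norm_sub_le _ _) ha.le
        _ ≤ a * ((R' + ξ₀ * (‖B‖ * ‖y‖ + δ * (R' + ‖y‖))) + δ * (R' + ‖y‖)) := by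
            refine mul_le_mul_of_nonneg_left (add_le_add ?_ ?_) ha.le
            · exact (hφq _ hq).trans
                (add_le_add_right (mul_le_mul_of_nonneg_left hqb hξ₀0) R')
            · exact hH1.trans (mul_le_mul_of_nonneg_left hM hδ0.le)
        _ ≤ R' + ξ₀ * ‖y‖ := harith2 ‖y‖ hy0
    have hlipF : LipschitzOnWith (a * (δ * (1 + ξ₀))).toNNReal (F y)
        (closedBall (0 : EuclideanSpace ℂ (Fin k₁)) (R' + ξ₀ * ‖y‖)) := by
      apply LipschitzOnWith.of_dist_le_mul
      intro x hx x' hx'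
      rw [mem_closedBall_zero_iff] at hx hx'
      obtain ⟨⟨hball, -⟩, hq⟩ := hmem y hy x hx
      obtain ⟨⟨hball', -⟩, hq'⟩ := hmem y hy x' hx'
      have hHd : ‖H (x, y) - H (x', y)‖ ≤ δ * ‖x - x'‖ := by
        have h9 := hHlip (x, y) hball (x', y) hball'
        have he : ((x, y) - (x', y) : EuclideanSpace ℂ (Fin k₁) ×
            EuclideanSpace ℂ (Fin k₂)) = (x - x', 0) := by
          rw [Prod.mk_sub_mk, sub_self]
        rw [he] at h9
        refine h9.trans ?_
        apply mul_le_mul_of_nonneg_left _ hδ0.le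
        rw [Prod.norm_def]
        exact max_le le_rfl (by simp [norm_nonneg])
      have hqd : ‖(g (x, y)).2 - (g (x', y)).2‖ ≤ δ * ‖x - x'‖ := by
        have he : (g (x, y)).2 - (g (x', y)).2 = (H (x, y) - H (x', y)).2 := by
          rw [Prod.snd_sub, hg2, hg2]
          abel
        rw [he]
        exact (norm_snd_le _).trans hHd
      have hφd : ‖φ ((g (x, y)).2) - φ ((g (x', y)).2)‖ ≤ ξ₀ * (δ * ‖x - x'‖) := by
        have h9 := hφlip.dist_le_mul ((g (x, y)).2) (mem_closedBall_zero_iff.mpr hq)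
          ((g (x', y)).2) (mem_closedBall_zero_iff.mpr hq')
        rw [dist_eq_norm, hcoeξ, dist_eq_norm] at h9
        exact h9.trans (mul_le_mul_of_nonneg_left hqd hξ₀0)
      rw [dist_eq_norm, dist_eq_norm, hF_def,
        Real.coe_toNNReal _ (by positivity : (0:ℝ) ≤ a * (δ * (1 + ξ₀)))]
      rw [← map_sub, sub_sub_sub_comm]
      calc ‖A.symm ((φ ((g (x, y)).2) - φ ((g (x', y)).2)) -
            ((H (x, y)).1 - (H (x', y)).1))‖
          ≤ a * ‖(φ ((g (x, y)).2) - φ ((g (x', y)).2)) -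
            ((H (x, y)).1 - (H (x', y)).1)‖ := hAs _
        _ ≤ a * (ξ₀ * (δ * ‖x - x'‖) + δ * ‖x - x'‖) := by
            refine mul_le_mul_of_nonneg_left ((norm_sub_le _ _).trans
              (add_le_add hφd ?_)) ha.le
            have h10 : (H (x, y)).1 - (H (x', y)).1 = (H (x, y) - H (x', y)).1 := rfl
            rw [h10]
            exact (norm_fst_le _).trans hHd
        _ ≤ a * (δ * (1 + ξ₀)) * ‖x - x'‖ := by ring_nf; rfl
    have hcontr : ContractingWith (a * (δ * (1 + ξ₀))).toNNReal
        (hsf.restrict (F y) _ _) := by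
      constructor
      · rw [← NNReal.coe_lt_one, Real.coe_toNNReal _ (by positivity : (0:ℝ) ≤ a * (δ * (1 + ξ₀)))]
        exact hκ
      · exact hlipF.mapsToRestrict hsf
    obtain ⟨x, hxs, hfix, -, -⟩ := hcontr.exists_fixedPoint' hsc hsf
      (mem_closedBall_self hr) (edist_ne_top _ _)
    exact ⟨x, mem_closedBall_zero_iff.mp hxs, hfix.symm⟩
  choose! ψ hψ1 hψ2 using exists_fix
  -- fixed point gives graph equation
  have hgraph : ∀ (y : EuclideanSpace ℂ (Fin k₂)), ‖y‖ ≤ R * Ee →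
      (g (ψ y, y)).1 = φ ((g (ψ y, y)).2) := by
    intro y hy
    have hfix : ψ y = A.symm (φ ((g (ψ y, y)).2) - (H (ψ y, y)).1) := by
      conv_lhs => rw [hψ2 y hy, hF_def]
    have h9 : A (ψ y) = φ ((g (ψ y, y)).2) - (H (ψ y, y)).1 := by
      conv_lhs => rw [hfix]
      exact A.apply_symm_apply _
    rw [hg1, h9]
    abel
  refine ⟨ψ, ?_, ?_, ?_⟩
  · -- Lipschitz bound for ψ
    apply LipschitzOnWith.of_dist_le_mul
    intro y hy y' hy'
    rw [mem_closedBall_zero_iff] at hy hy'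
    rw [dist_eq_norm, dist_eq_norm, hcoeξ]
    obtain ⟨⟨hball, -⟩, hq⟩ := hmem y hy (ψ y) (hψ1 y hy)
    obtain ⟨⟨hball', -⟩, hq'⟩ := hmem y' hy' (ψ y') (hψ1 y' hy')
    have hd0 : (0:ℝ) ≤ ‖ψ y - ψ y'‖ := norm_nonneg _
    have he0 : (0:ℝ) ≤ ‖y - y'‖ := norm_nonneg _
    have hHd : ‖H (ψ y, y) - H (ψ y', y')‖ ≤ δ * (‖ψ y - ψ y'‖ + ‖y - y'‖) := by
      have h9 := hHlip (ψ y, y) hball (ψ y', y') hball'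
      have heq : ((ψ y, y) - (ψ y', y') : EuclideanSpace ℂ (Fin k₁) ×
          EuclideanSpace ℂ (Fin k₂)) = (ψ y - ψ y', y - y') := rfl
      rw [heq] at h9
      refine h9.trans ?_
      apply mul_le_mul_of_nonneg_left _ hδ0.le
      rw [Prod.norm_def]
      exact max_le (by linarith) (by linarith)
    have hqd : ‖(g (ψ y, y)).2 - (g (ψ y', y')).2‖ ≤
        ‖B‖ * ‖y - y'‖ + δ * (‖ψ y - ψ y'‖ + ‖y - y'‖) := by
      have heq : (g (ψ y, y)).2 - (g (ψ y', y')).2 =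
          B (y - y') + (H (ψ y, y) - H (ψ y', y')).2 := by
        rw [Prod.snd_sub, hg2, hg2, map_sub]
        abel
      rw [heq]
      refine (norm_add_le _ _).trans (add_le_add (B.le_opNorm _) ?_)
      exact (norm_snd_le _).trans hHd
    have hφd : ‖φ ((g (ψ y, y)).2) - φ ((g (ψ y', y')).2)‖ ≤
        ξ₀ * (‖B‖ * ‖y - y'‖ + δ * (‖ψ y - ψ y'‖ + ‖y - y'‖)) := by
      have h9 := hφlip.dist_le_mul ((g (ψ y, y)).2) (mem_closedBall_zero_iff.mpr hq)
        ((g (ψ y', y')).2) (mem_closedBall_zero_iff.mpr hq')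
      rw [dist_eq_norm, hcoeξ, dist_eq_norm] at h9
      exact h9.trans (mul_le_mul_of_nonneg_left hqd hξ₀0)
    have hFd : ψ y - ψ y' =
        A.symm ((φ ((g (ψ y, y)).2) - φ ((g (ψ y', y')).2)) -
          ((H (ψ y, y)).1 - (H (ψ y', y')).1)) := by
      conv_lhs => rw [hψ2 y hy, hψ2 y' hy', hF_def]
      rw [← map_sub, sub_sub_sub_comm]
    have hkey : ‖ψ y - ψ y'‖ ≤ a * (ξ₀ * (‖B‖ * ‖y - y'‖ +
        δ * (‖ψ y - ψ y'‖ + ‖y - y'‖)) + δ * (‖ψ y - ψ y'‖ + ‖y - y'‖)) := by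
      conv_lhs => rw [hFd]
      refine (hAs _).trans (mul_le_mul_of_nonneg_left ?_ ha.le)
      refine (norm_sub_le _ _).trans (add_le_add hφd ?_)
      have h10 : (H (ψ y, y)).1 - (H (ψ y', y')).1 =
          (H (ψ y, y) - H (ψ y', y')).1 := rfl
      rw [h10]
      exact (norm_fst_le _).trans hHd
    exact harith3 _ _ hd0 he0 hkey
  · -- bound at 0
    have h0 : ‖(0 : EuclideanSpace ℂ (Fin k₂))‖ ≤ R * Ee := by
      rw [norm_zero]; positivity
    have := hψ1 0 h0
    simpa using this
  · -- image containment
    rintro z ⟨w, ⟨y, hy, rfl⟩, rfl⟩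
    rw [mem_closedBall_zero_iff] at hy
    obtain ⟨-, hq⟩ := hmem y hy (ψ y) (hψ1 y hy)
    refine ⟨(g (ψ y, y)).2, mem_closedBall_zero_iff.mpr hq, ?_⟩
    show (φ ((g (ψ y, y)).2), (g (ψ y, y)).2) = g (ψ y, y)
    rw [← hgraph y hy]
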